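/- If a univariate polynomial matrix M : ℝ → (n×n symmetric real matrices), each entry of degree at most d with d even, satisfies M(s) ⪰ 0 for all s ∈ [0,1], then ∫₀¹ M(s) ds ⪰ (1/(2(d²−1))) · M(0), where ⪰ denotes the Loewner (positive semidefinite) order. -/

import Mathlib

open Polynomial intervalIntegral Set
open scoped Nat

namespace Stmt0Aux

noncomputable def W (k : ℕ) : ℝ[X] := (X ^ 2 - X) ^ k
noncomputable def R (k : ℕ) : ℝ[X] := derivative^[k] (W k)




lemma iter_deriv_add (n : ℕ) (p q : ℝ[X]) :
    derivative^[n] (p + q) = derivative^[n] p + derivative^[n] q := by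
  induction n generalizing p q with
  | zero => simp
  | succ n ih => simp [Function.iterate_succ_apply', ih, derivative_add]

lemma X2X : (X ^ 2 - X : ℝ[X]) = X * (X - C 1) := by rw [C_1]; ring

lemma monic_X2X : (X ^ 2 - X : ℝ[X]).Monic :=
  monic_X_pow_sub (by simpa using degree_X_le)

lemma natDegree_X2X : (X ^ 2 - X : ℝ[X]).natDegree = 2 := by
  have h : (X ^ 2 - X : ℝ[X]).degree = 2 := by
    rw [degree_sub_eq_left_of_degree_lt] <;> simp
  exact natDegree_eq_of_degree_eq_some h

lemma natDegree_W (k : ℕ) : (W k).natDegree = 2 * k := by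
  rw [W, monic_X2X.natDegree_pow, natDegree_X2X, mul_comm]

lemma X_pow_dvd_W (k : ℕ) : (X : ℝ[X]) ^ k ∣ W k := by
  rw [W, X2X, mul_pow]; exact Dvd.intro _ rfl

lemma X_sub_one_pow_dvd_W (k : ℕ) : ((X : ℝ[X]) - C 1) ^ k ∣ W k := by
  rw [W, X2X, mul_pow]; exact Dvd.intro_left _ rfl

lemma eval_iterate_deriv_eq_zero {a : ℝ} {g : ℝ[X]} {m i : ℕ}
    (hdvd : ((X : ℝ[X]) - C a) ^ m ∣ g) (hi : i < m) :
    eval a (derivative^[i] g) = 0 := by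
  have h := pow_sub_dvd_iterate_derivative_of_pow_dvd i hdvd
  obtain ⟨h', hh⟩ := h
  rw [hh]
  have hmi : m - i ≠ 0 := Nat.sub_ne_zero_of_lt hi
  rw [eval_mul, eval_pow]
  simp [hmi]

lemma pint (p : ℝ[X]) : IntervalIntegrable (fun s => eval s p) MeasureTheory.volume 0 1 :=
  p.continuous.intervalIntegrable _ _

lemma pint2 (p q : ℝ[X]) :
    IntervalIntegrable (fun s => eval s p * eval s q) MeasureTheory.volume 0 1 :=
  (p.continuous.mul q.continuous).intervalIntegrable _ _

/-- iterated integration by parts with vanishing boundary terms -/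
lemma parts : ∀ (m : ℕ) (f g : ℝ[X]), (X : ℝ[X]) ^ m ∣ g → ((X : ℝ[X]) - C 1) ^ m ∣ g →
    ∫ s in (0:ℝ)..1, eval s f * eval s (derivative^[m] g)
      = (-1 : ℝ) ^ m * ∫ s in (0:ℝ)..1, eval s (derivative^[m] f) * eval s g := by
  intro m
  induction m with
  | zero => intro f g _ _; simp
  | succ m ih =>
    intro f g h0 h1
    have h0' : (X : ℝ[X]) ^ m ∣ g := dvd_trans (pow_dvd_pow _ (Nat.le_succ m)) h0
    have h1' : ((X : ℝ[X]) - C 1) ^ m ∣ g := dvd_trans (pow_dvd_pow _ (Nat.le_succ m)) h1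
    have key :
        ∫ s in (0:ℝ)..1, eval s f * eval s (derivative (derivative^[m] g))
          = eval 1 f * eval 1 (derivative^[m] g) - eval 0 f * eval 0 (derivative^[m] g)
            - ∫ s in (0:ℝ)..1, eval s (derivative f) * eval s (derivative^[m] g) := by
      exact integral_mul_deriv_eq_deriv_mul
        (fun x _ => f.hasDerivAt x) (fun x _ => (derivative^[m] g).hasDerivAt x)
        (pint _) (pint _)
    have e1 : eval (1:ℝ) (derivative^[m] g) = 0 :=
      eval_iterate_deriv_eq_zero h1 (Nat.lt_succ_self m)
    have e0 : eval (0:ℝ) (derivative^[m] g) = 0 := by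
      have := eval_iterate_deriv_eq_zero (a := (0:ℝ)) (by simpa using h0) (Nat.lt_succ_self m)
      simpa using this
    rw [Function.iterate_succ_apply', key, e1, e0]
    rw [ih (derivative f) g h0' h1']
    rw [← Function.iterate_succ_apply]
    ring

lemma orth0 {j k : ℕ} (h : j < k) :
    ∫ s in (0:ℝ)..1, eval s (R j) * eval s (R k) = 0 := by
  rw [R, R, parts k _ _ (X_pow_dvd_W k) (X_sub_one_pow_dvd_W k)]
  have : derivative^[k] (derivative^[j] (W j)) = 0 := by
    rw [← Function.iterate_add_apply]
    exact iterate_derivative_eq_zero (by rw [natDegree_W]; omega)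
  rw [this]
  simp

lemma top_deriv (k : ℕ) : derivative^[2 * k] (W k) = C ((2 * k)! : ℝ) := by
  have hd : derivative^[2 * k] (X ^ (2 * k) : ℝ[X]) = C ((2 * k)! : ℝ) := by
    rw [iterate_derivative_X_pow_eq_C_mul]
    simp [Nat.descFactorial_self]
  have hrest : derivative^[2 * k] (W k - X ^ (2 * k)) = 0 := by
    rcases eq_or_ne (W k - X ^ (2 * k)) 0 with h | h
    · rw [h]; simp
    · refine iterate_derivative_eq_zero ?_
      rw [natDegree_lt_iff_degree_lt h]
      have hm : (W k).Monic := monic_X2X.pow k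
      have hWdeg : (W k).degree = ((2 * k : ℕ) : WithBot ℕ) := by
        rw [degree_eq_natDegree hm.ne_zero, natDegree_W]
      calc (W k - X ^ (2 * k)).degree < (W k).degree := by
            refine degree_sub_lt ?_ hm.ne_zero ?_
            · rw [hWdeg, degree_X_pow]
            · rw [hm.leadingCoeff, monic_X_pow]
        _ = ((2 * k : ℕ) : WithBot ℕ) := hWdeg
  have hsplit : W k = (W k - X ^ (2 * k)) + X ^ (2 * k) := by ring
  rw [hsplit, iter_deriv_add, hrest, hd, zero_add]



lemma beta_int : ∀ (b a : ℕ), ∫ s in (0:ℝ)..1, s ^ a * (1 - s) ^ b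
    = (a ! : ℝ) * (b ! : ℝ) / ((a + b + 1)! : ℝ) := by
  intro b
  induction b with
  | zero =>
    intro a
    simp only [pow_zero, mul_one, Nat.factorial_zero, Nat.cast_one, Nat.add_zero]
    rw [integral_pow]
    rw [Nat.factorial_succ]
    push_cast
    have : (a ! : ℝ) ≠ 0 := by positivity
    field_simp
    simp
  | succ b ih =>
    intro a
    have hu : ∀ x ∈ uIcc (0:ℝ) 1, HasDerivAt (fun s : ℝ => (1 - s) ^ (b + 1))
        (-((b + 1 : ℝ) * (1 - x) ^ b)) x := by
      intro x _
      have h1 : HasDerivAt (fun s : ℝ => 1 - s) (-1) x := by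
        simpa using (hasDerivAt_id x).const_sub 1
      have := h1.fun_pow (b + 1)
      simpa [mul_comm, mul_assoc, mul_left_comm] using this
    have hv : ∀ x ∈ uIcc (0:ℝ) 1, HasDerivAt (fun s : ℝ => s ^ (a + 1) / (a + 1 : ℝ))
        (x ^ a) x := by
      intro x _
      have := (hasDerivAt_pow (a + 1) x).div_const (a + 1 : ℝ)
      have ha : ((a:ℝ) + 1) ≠ 0 := by positivity
      refine this.congr_deriv ?_
      push_cast
      field_simp
    have hint1 : IntervalIntegrable (fun x : ℝ => -((b + 1 : ℝ) * (1 - x) ^ b))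
        MeasureTheory.volume 0 1 := by
      apply Continuous.intervalIntegrable; continuity
    have hint2 : IntervalIntegrable (fun x : ℝ => x ^ a) MeasureTheory.volume 0 1 := by
      apply Continuous.intervalIntegrable; continuity
    have key := integral_mul_deriv_eq_deriv_mul hu hv hint1 hint2
    simp only [sub_self, zero_pow (Nat.succ_ne_zero b), zero_div, mul_zero, zero_mul, sub_zero,
      one_pow, zero_sub] at key
    have e2 : ∫ x in (0:ℝ)..1, (1 - x) ^ (b + 1) * x ^ a
        = ∫ x in (0:ℝ)..1, x ^ a * (1 - x) ^ (b + 1) := by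
      congr 1; ext x; ring
    have e3 : ∫ x in (0:ℝ)..1, -((b + 1 : ℝ) * (1 - x) ^ b) * (x ^ (a + 1) / (a + 1 : ℝ))
        = -((b + 1 : ℝ) / (a + 1 : ℝ)) * ∫ x in (0:ℝ)..1, x ^ (a + 1) * (1 - x) ^ b := by
      rw [← integral_const_mul]
      congr 1; ext x; ring
    rw [e2] at key
    rw [e3] at key
    rw [key, ih (a + 1)]
    have h1 : ((a + 1)! : ℝ) = (a + 1) * a ! := by
      rw [Nat.factorial_succ]; push_cast; ring
    have h2 : ((b + 1)! : ℝ) = (b + 1) * b ! := by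
      rw [Nat.factorial_succ]; push_cast; ring
    have h3 : (a + 1 + b + 1) = (a + (b+1) + 1) := by omega
    rw [h3] at *
    have ha : ((a:ℝ) + 1) ≠ 0 := by positivity
    have hf : ((a + (b+1) + 1)! : ℝ) ≠ 0 := by positivity
    field_simp [h1, h2]
    ring
    rw [add_comm 1 a, add_comm 1 b, h1, h2]; ring



lemma Nval (k : ℕ) : ∫ s in (0:ℝ)..1, eval s (R k) * eval s (R k)
    = ((k ! : ℝ)) ^ 2 / (2 * k + 1) := by
  rw [R, parts k _ _ (X_pow_dvd_W k) (X_sub_one_pow_dvd_W k)]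
  have h2k : derivative^[k] (derivative^[k] (W k)) = C ((2 * k)! : ℝ) := by
    rw [← Function.iterate_add_apply]
    have : k + k = 2 * k := by ring
    rw [this, top_deriv]
  rw [h2k]
  have hW : ∀ s : ℝ, eval s (W k) = (-1 : ℝ) ^ k * (s ^ k * (1 - s) ^ k) := by
    intro s
    rw [W]
    simp only [eval_pow, eval_sub, eval_X]
    rw [show (s ^ 2 - s) = (-1) * (s * (1 - s)) by ring, mul_pow, mul_pow]
  have : (∫ s in (0:ℝ)..1, eval s (C ((2 * k)! : ℝ)) * eval s (W k))
      = ((2 * k)! : ℝ) * ((-1:ℝ) ^ k * ((k ! : ℝ) * (k ! : ℝ) / ((k + k + 1)! : ℝ))) := by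
    rw [← beta_int k k]
    calc (∫ s in (0:ℝ)..1, eval s (C ((2 * k)! : ℝ)) * eval s (W k))
        = ∫ s in (0:ℝ)..1, ((2 * k)! : ℝ) * ((-1:ℝ) ^ k * (s ^ k * (1 - s) ^ k)) := by
          apply integral_congr
          intro s _
          simp only []
          rw [hW s, eval_C]
      _ = ((2 * k)! : ℝ) * ((-1:ℝ) ^ k * ∫ s in (0:ℝ)..1, s ^ k * (1 - s) ^ k) := by
          rw [integral_const_mul, integral_const_mul]
  rw [this]
  have hkk : (k + k + 1) = 2 * k + 1 := by ring
  rw [hkk, Nat.factorial_succ]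
  have h1 : ((-1:ℝ) ^ k) * ((-1:ℝ) ^ k) = 1 := by
    rw [← pow_add]; exact Even.neg_one_pow ⟨k, rfl⟩
  have hne : ((2 * k)! : ℝ) ≠ 0 := by positivity
  have hne2 : ((2 * k : ℕ) : ℝ) + 1 ≠ 0 := by positivity
  field_simp
  push_cast
  linear_combination (((2 * k)! : ℝ) * (2 * (k:ℝ) + 1)) * h1

/-- key evaluation lemma -/
lemma eval_iter_deriv (a : ℝ) : ∀ (n : ℕ) (h : ℝ[X]),
    eval a (derivative^[n] ((X - C a) ^ n * h)) = (n ! : ℝ) * eval a h := by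
  intro n
  induction n with
  | zero => intro h; simp
  | succ n ih =>
    intro h
    have hD : derivative ((X - C a) ^ (n + 1) * h)
        = (X - C a) ^ n * (C ((n : ℝ) + 1) * h + (X - C a) * derivative h) := by
      rw [derivative_mul, derivative_pow]
      simp only [derivative_sub, derivative_X, derivative_C, sub_zero, Nat.add_sub_cancel]
      push_cast
      ring
    rw [Function.iterate_succ_apply, hD, ih]
    simp only [eval_add, eval_mul, eval_C, eval_sub, eval_X, sub_self, zero_mul, add_zero]
    rw [Nat.factorial_succ]
    push_cast
    ring

lemma eval_R_one (k : ℕ) : eval 1 (R k) = (k ! : ℝ) := by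
  have hW : W k = (X - C 1) ^ k * X ^ k := by
    rw [W, show (X^2 - X : ℝ[X]) = (X - C 1) * X by rw [C_1]; ring, mul_pow]
  rw [R, hW, eval_iter_deriv]
  simp

lemma eval_R_zero (k : ℕ) : eval 0 (R k) = (-1 : ℝ) ^ k * (k ! : ℝ) := by
  have hW : W k = (X - C 0) ^ k * (X - C 1) ^ k := by
    rw [W, show (X^2 - X : ℝ[X]) = (X - C 0) * (X - C 1) by rw [C_1, C_0]; ring, mul_pow]
  rw [R, hW, eval_iter_deriv]
  simp [mul_comm]

lemma coeff_R (k : ℕ) : (R k).coeff k = ((2 * k).descFactorial k : ℝ) := by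
  rw [R, coeff_iterate_derivative]
  have : (k + k) = 2 * k := by ring
  rw [this]
  have hc : (W k).coeff (2 * k) = 1 := by
    have hm : (W k).Monic := by
      apply Polynomial.Monic.pow
      exact monic_X_pow_sub (by simpa using degree_X_le)
    have := hm.leadingCoeff
    rwa [leadingCoeff, show (W k).natDegree = 2 * k from ?_] at this
    · rw [W]
      rw [Polynomial.Monic.natDegree_pow (monic_X_pow_sub (by simpa using degree_X_le))]
      have : (X ^ 2 - X : ℝ[X]).natDegree = 2 := by
        have h : (X ^ 2 - X : ℝ[X]).degree = 2 := by
          rw [degree_sub_eq_left_of_degree_lt] <;> simp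
        exact natDegree_eq_of_degree_eq_some h
      rw [this, mul_comm]
  rw [hc]
  simp

lemma R_ne_zero (k : ℕ) : R k ≠ 0 := by
  intro h
  have := coeff_R k
  rw [h] at this
  simp only [coeff_zero] at this
  have h2 : (2 * k).descFactorial k ≠ 0 := by
    rw [Ne, Nat.descFactorial_eq_zero_iff_lt]
    omega
  exact h2 (by exact_mod_cast this.symm)

lemma natDegree_R (k : ℕ) : (R k).natDegree = k := by
  apply le_antisymm
  · have := natDegree_iterate_derivative (W k) k
    rw [R]
    refine le_trans this ?_
    have : (W k).natDegree = 2 * k := by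
      rw [W, Polynomial.Monic.natDegree_pow (monic_X_pow_sub (by simpa using degree_X_le))]
      have h2 : (X ^ 2 - X : ℝ[X]).natDegree = 2 := by
        have h : (X ^ 2 - X : ℝ[X]).degree = 2 := by
          rw [degree_sub_eq_left_of_degree_lt] <;> simp
        exact natDegree_eq_of_degree_eq_some h
      rw [h2, mul_comm]
    omega
  · apply le_natDegree_of_ne_zero
    rw [coeff_R]
    have h2 : (2 * k).descFactorial k ≠ 0 := by
      rw [Ne, Nat.descFactorial_eq_zero_iff_lt]; omega
    exact_mod_cast h2



/-- Leibniz for a polynomial with vanishing second derivative -/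
lemma leib1 (ℓ : ℝ[X]) (hℓ : derivative (derivative ℓ) = 0) :
    ∀ (n : ℕ) (f : ℝ[X]), derivative^[n + 1] (ℓ * f)
      = ℓ * derivative^[n + 1] f + ((n : ℝ[X]) + 1) * (derivative ℓ * derivative^[n] f) := by
  intro n
  induction n with
  | zero =>
    intro f
    show derivative (ℓ * f) = _
    simp only [zero_add, Function.iterate_one, Function.iterate_zero_apply, derivative_mul, Nat.cast_zero]
    ring
  | succ n ih =>
    intro f
    rw [Function.iterate_succ_apply' _ (n + 1), ih f]
    simp only [derivative_add, derivative_mul, derivative_natCast, derivative_one, hℓ]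
    rw [← Function.iterate_succ_apply' derivative (n+1) f,
        ← Function.iterate_succ_apply' derivative n f]
    push_cast
    ring

/-- doubled Leibniz for a polynomial with vanishing third derivative -/
lemma leib2 (q : ℝ[X]) (hq : derivative (derivative (derivative q)) = 0) :
    ∀ (n : ℕ) (f : ℝ[X]), 2 * derivative^[n + 2] (q * f)
      = 2 * (q * derivative^[n + 2] f)
        + 2 * ((n : ℝ[X]) + 2) * (derivative q * derivative^[n + 1] f)
        + ((n : ℝ[X]) + 2) * ((n : ℝ[X]) + 1) * (derivative (derivative q) * derivative^[n] f) := by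
  intro n
  induction n with
  | zero =>
    intro f
    show 2 * derivative (derivative (q * f)) = _
    simp only [zero_add, derivative_mul, derivative_add, Function.iterate_succ_apply',
      Function.iterate_zero_apply, Function.iterate_one, Nat.cast_zero]
    ring
  | succ n ih =>
    intro f
    have h3 : 2 * derivative^[n + 1 + 2] (q * f)
        = derivative (2 * derivative^[n + 2] (q * f)) := by
      rw [show n + 1 + 2 = (n + 2) + 1 by ring, Function.iterate_succ_apply' _ (n + 2),
        derivative_mul]
      simp
    rw [h3, ih f]
    simp only [derivative_add, derivative_mul, derivative_natCast, derivative_one,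
      derivative_ofNat, hq]
    rw [← Function.iterate_succ_apply' derivative (n+2) f,
        ← Function.iterate_succ_apply' derivative (n+1) f,
        ← Function.iterate_succ_apply' derivative n f]
    push_cast
    ring

lemma deriv_X2X : derivative (X ^ 2 - X : ℝ[X]) = 2 * X - 1 := by
  simp only [derivative_sub, derivative_X_pow, derivative_X]
  norm_num
  exact map_ofNat C 2

lemma base_identity (m : ℕ) :
    (X ^ 2 - X) * derivative (W (m + 1)) = ((m : ℝ[X]) + 1) * ((2 * X - 1) * W (m + 1)) := by
  rw [W, derivative_pow, deriv_X2X, Nat.add_sub_cancel]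
  rw [show (C ((m+1 : ℕ) : ℝ)) = ((m : ℝ[X]) + 1) by push_cast [C_eq_natCast]; norm_num]
  ring

lemma ode (k : ℕ) (hk : 1 ≤ k) :
    (X ^ 2 - X) * derivative (derivative (R k)) + (2 * X - 1) * derivative (R k)
      = ((k : ℝ[X]) * ((k : ℝ[X]) + 1)) * R k := by
  obtain ⟨m, rfl⟩ : ∃ m, k = m + 1 := ⟨k - 1, by omega⟩
  have hq3 : derivative (derivative (derivative (X ^ 2 - X : ℝ[X]))) = 0 := by
    rw [deriv_X2X]; simp
  have hl2 : derivative (derivative (2 * X - 1 : ℝ[X])) = 0 := by simp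
  have happ := congrArg (fun p => 2 * derivative^[m + 2] p) (base_identity m)
  rw [leib2 _ hq3 m (derivative (W (m + 1)))] at happ
  have hC : (2 : ℝ[X]) * derivative^[m + 2] (((m : ℝ[X]) + 1) * ((2 * X - 1) * W (m + 1)))
      = ((m : ℝ[X]) + 1) * (2 * derivative^[m + 2] ((2 * X - 1) * W (m + 1))) := by
    have hc2 : (((m : ℝ[X]) + 1) : ℝ[X]) = C ((m : ℝ) + 1) := by
      push_cast [C_eq_natCast]; norm_num
    rw [hc2, iterate_derivative_C_mul]; ring
  rw [hC, show m + 2 = (m + 1) + 1 by ring, leib1 _ hl2 (m + 1) (W (m + 1))] at happ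
  have key : ∀ i : ℕ, derivative^[i] (derivative (W (m + 1))) = derivative^[i + 1] (W (m + 1)) :=
    fun i => (Function.iterate_succ_apply derivative i (W (m+1))).symm
  rw [key m, key (m+1), key (m+1+1)] at happ
  have hR : derivative^[m + 1] (W (m + 1)) = R (m + 1) := rfl
  have hR1 : derivative^[m + 1 + 1] (W (m + 1)) = derivative (R (m + 1)) := by
    rw [Function.iterate_succ_apply', hR]
  have hR2 : derivative^[m + 1 + 1 + 1] (W (m + 1)) = derivative (derivative (R (m + 1))) := by
    rw [Function.iterate_succ_apply', hR1]
  rw [hR, hR1, hR2] at happ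
  have hder2 : derivative (derivative (X ^ 2 - X : ℝ[X])) = 2 := by rw [deriv_X2X]; simp
  have hderL : derivative (2 * X - 1 : ℝ[X]) = 2 := by simp
  rw [hder2, deriv_X2X, hderL] at happ
  apply mul_left_cancel₀ (two_ne_zero' ℝ[X])
  push_cast at happ ⊢
  linear_combination happ


lemma sup_R (k : ℕ) : ∀ s ∈ Icc (0:ℝ) 1, |eval s (R k)| ≤ (k ! : ℝ) := by
  rcases Nat.eq_zero_or_pos k with rfl | hk
  · intro s _
    have : R 0 = 1 := by simp [R, W]
    rw [this]
    simp
  -- k ≥ 1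
  set lam : ℝ := (k : ℝ) * ((k : ℝ) + 1) with hlam
  have hlampos : 0 < lam := by
    have : (1:ℝ) ≤ (k:ℝ) := by exact_mod_cast hk
    positivity
  set u : ℝ → ℝ := fun s => eval s (R k) with hu
  set u1 : ℝ → ℝ := fun s => eval s (derivative (R k)) with hu1
  set u2 : ℝ → ℝ := fun s => eval s (derivative (derivative (R k))) with hu2
  have odes : ∀ s : ℝ, (s ^ 2 - s) * u2 s + (2 * s - 1) * u1 s = lam * u s := by
    intro s
    have := congrArg (eval s) (ode k hk)
    simpa [hu, hu1, hu2, hlam] using this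
  set v : ℝ → ℝ := fun s => (u s) ^ 2 + (s - s ^ 2) * (u1 s) ^ 2 / lam with hv
  have hvd : ∀ s : ℝ, HasDerivAt v ((2 * s - 1) * (u1 s) ^ 2 / lam) s := by
    intro s
    have h1 : HasDerivAt (fun t => (u t) ^ 2) (2 * u s * u1 s) s := by
      have := ((R k).hasDerivAt s).fun_pow 2
      simpa [hu, hu1, mul_comm, mul_assoc] using this
    have h2 : HasDerivAt (fun t : ℝ => t - t ^ 2) (1 - 2 * s) s := by
      simpa using (hasDerivAt_id s).fun_sub (hasDerivAt_pow 2 s)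
    have h3 : HasDerivAt (fun t => (u1 t) ^ 2) (2 * u1 s * u2 s) s := by
      have := ((derivative (R k)).hasDerivAt s).fun_pow 2
      simpa [hu1, hu2, mul_comm, mul_assoc] using this
    have h4 : HasDerivAt (fun t : ℝ => (t - t ^ 2) * (u1 t) ^ 2)
        ((1 - 2 * s) * (u1 s) ^ 2 + (s - s ^ 2) * (2 * u1 s * u2 s)) s := h2.mul h3
    have h5 := (h1.add (h4.div_const lam))
    have : (2 * s - 1) * (u1 s) ^ 2 / lam
        = 2 * u s * u1 s + ((1 - 2 * s) * (u1 s) ^ 2 + (s - s ^ 2) * (2 * u1 s * u2 s)) / lam := by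
      field_simp
      linear_combination (2 * u1 s) * odes s
    rw [this]
    exact h5
  have hvc : Continuous v := by
    apply Continuous.add (((R k).continuous).pow 2)
    exact ((continuous_id.sub (continuous_pow 2)).mul
      (((derivative (R k)).continuous).pow 2)).div_const _
  have hmono1 : AntitoneOn v (Icc (0:ℝ) (1/2)) := by
    apply antitoneOn_of_deriv_nonpos (convex_Icc _ _) hvc.continuousOn
    · intro x _
      exact (hvd x).differentiableAt.differentiableWithinAt
    · intro x hx
      rw [interior_Icc] at hx
      rw [(hvd x).deriv]
      apply div_nonpos_of_nonpos_of_nonneg _ (le_of_lt hlampos)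
      have : 2 * x - 1 ≤ 0 := by linarith [hx.2]
      nlinarith [sq_nonneg (u1 x)]
  have hmono2 : MonotoneOn v (Icc (1/2:ℝ) 1) := by
    apply monotoneOn_of_deriv_nonneg (convex_Icc _ _) hvc.continuousOn
    · intro x _
      exact (hvd x).differentiableAt.differentiableWithinAt
    · intro x hx
      rw [interior_Icc] at hx
      rw [(hvd x).deriv]
      apply div_nonneg _ (le_of_lt hlampos)
      have : 0 ≤ 2 * x - 1 := by linarith [hx.1]
      nlinarith [sq_nonneg (u1 x)]
  have hv0 : v 0 = (k ! : ℝ) ^ 2 := by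
    simp only [hv, hu]
    rw [eval_R_zero]
    ring_nf
    rw [show ((-1:ℝ) ^ (k * 2)) = 1 from Even.neg_one_pow ⟨k, by ring⟩]
    ring
  have hv1 : v 1 = (k ! : ℝ) ^ 2 := by
    simp only [hv, hu]
    rw [eval_R_one]
    ring
  intro s hs
  have husq : (u s) ^ 2 ≤ (k ! : ℝ) ^ 2 := by
    have hle : (u s) ^ 2 ≤ v s := by
      have : 0 ≤ (s - s ^ 2) * (u1 s) ^ 2 / lam := by
        apply div_nonneg _ (le_of_lt hlampos)
        have : 0 ≤ s - s ^ 2 := by nlinarith [hs.1, hs.2]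
        positivity
      simp only [hv]; linarith
    rcases le_total s (1/2) with h | h
    · have h0 : (0:ℝ) ∈ Icc (0:ℝ) (1/2) := ⟨le_refl 0, by norm_num⟩
      have hsI : s ∈ Icc (0:ℝ) (1/2) := ⟨hs.1, h⟩
      calc (u s) ^ 2 ≤ v s := hle
        _ ≤ v 0 := hmono1 h0 hsI hs.1
        _ = (k ! : ℝ) ^ 2 := hv0
    · have h1I : (1:ℝ) ∈ Icc (1/2:ℝ) 1 := ⟨by norm_num, le_refl 1⟩
      have hsI : s ∈ Icc (1/2:ℝ) 1 := ⟨h, hs.2⟩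
      calc (u s) ^ 2 ≤ v s := hle
        _ ≤ v 1 := hmono2 hsI h1I hs.2
        _ = (k ! : ℝ) ^ 2 := hv1
  have hfactpos : (0:ℝ) < (k ! : ℝ) := by positivity
  have habs : |u s| ^ 2 = (u s) ^ 2 := sq_abs _
  nlinarith [abs_nonneg (u s)]


lemma orth {j k : ℕ} (h : j ≠ k) :
    ∫ s in (0:ℝ)..1, eval s (R j) * eval s (R k) = 0 := by
  rcases lt_or_gt_of_ne h with h' | h'
  · exact orth0 h'
  · rw [show (fun s => eval s (R j) * eval s (R k)) = fun s => eval s (R k) * eval s (R j) by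
      funext s; ring]
    exact orth0 h'

noncomputable def Kf (d : ℕ) : ℝ → ℝ := fun s =>
  ∑ k ∈ Finset.range (d + 1), ((2 * (k:ℝ) + 1) / ((k ! : ℝ)) ^ 2) * (eval 0 (R k) * eval s (R k))

lemma Kf_cont (d : ℕ) : Continuous (Kf d) := by
  apply continuous_finset_sum
  intro k _
  exact (continuous_const.mul (continuous_const.mul (R k).continuous))

lemma repro_R {j d : ℕ} (hj : j ≤ d) :
    ∫ s in (0:ℝ)..1, eval s (R j) * Kf d s = eval 0 (R j) := by
  have hbody : ∀ s : ℝ, eval s (R j) * Kf d s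
      = ∑ k ∈ Finset.range (d + 1),
          ((2 * (k:ℝ) + 1) / ((k ! : ℝ)) ^ 2 * eval 0 (R k)) * (eval s (R j) * eval s (R k)) := by
    intro s
    rw [Kf, Finset.mul_sum]
    apply Finset.sum_congr rfl
    intros; ring
  rw [show (fun s => eval s (R j) * Kf d s) = _ from funext hbody]
  rw [integral_finset_sum]
  swap
  · intro k _
    apply Continuous.intervalIntegrable
    exact continuous_const.mul ((R j).continuous.mul (R k).continuous)
  have : ∀ k ∈ Finset.range (d + 1),
      (∫ s in (0:ℝ)..1, ((2 * (k:ℝ) + 1) / ((k ! : ℝ)) ^ 2 * eval 0 (R k))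
        * (eval s (R j) * eval s (R k)))
      = if k = j then eval 0 (R j) else 0 := by
    intro k _
    rw [integral_const_mul]
    rcases eq_or_ne k j with rfl | hkj
    · rw [Nval, if_pos rfl, eval_R_zero]
      have h1 : ((k ! : ℝ)) ≠ 0 := by positivity
      have h2 : (2 * (k:ℝ) + 1) ≠ 0 := by positivity
      field_simp
    · rw [orth (Ne.symm hkj), if_neg hkj, mul_zero]
  rw [Finset.sum_congr rfl this, Finset.sum_ite_eq' (Finset.range (d+1)) j (fun _ => eval 0 (R j))]
  rw [if_pos (Finset.mem_range.2 (by omega))]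

lemma repro_aux (d : ℕ) : ∀ (N : ℕ), N ≤ d → ∀ p : ℝ[X], p.natDegree ≤ N →
    ∫ s in (0:ℝ)..1, eval s p * Kf d s = eval 0 p := by
  intro N
  induction N with
  | zero =>
    intro _ p hp
    obtain ⟨a, rfl⟩ : ∃ a, p = C a := ⟨p.coeff 0, eq_C_of_natDegree_le_zero hp⟩
    have hR0 : R 0 = 1 := by simp [R, W]
    have : ∀ s : ℝ, eval s (C a) * Kf d s = a * (eval s (R 0) * Kf d s) := by
      intro s; rw [hR0]; simp
    rw [show (fun s => eval s (C a) * Kf d s) = _ from funext this, integral_const_mul,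
      repro_R (Nat.zero_le d)]
    simp [hR0]
  | succ N ih =>
    intro hNd p hp
    have hcR : (R (N + 1)).coeff (N + 1) ≠ 0 := by
      rw [coeff_R]
      have h2 : (2 * (N+1)).descFactorial (N+1) ≠ 0 := by
        rw [Ne, Nat.descFactorial_eq_zero_iff_lt]; omega
      exact_mod_cast h2
    set c : ℝ := p.coeff (N + 1) / (R (N + 1)).coeff (N + 1) with hc
    set q : ℝ[X] := p - C c * R (N + 1) with hq
    have hqc : q.coeff (N + 1) = 0 := by
      rw [hq]
      simp only [coeff_sub, coeff_C_mul, hc]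
      field_simp
      simp
    have hqd : q.natDegree ≤ N := by
      rw [natDegree_le_iff_coeff_eq_zero]
      intro M hM
      rcases eq_or_lt_of_le (Nat.succ_le_of_lt hM) with h | h
      · rw [← h]; exact hqc
      · rw [hq, coeff_sub, coeff_C_mul]
        rw [coeff_eq_zero_of_natDegree_lt (lt_of_le_of_lt hp h),
          coeff_eq_zero_of_natDegree_lt (by rw [natDegree_R]; exact h)]
        ring
    have hsplit : ∀ s : ℝ, eval s p * Kf d s
        = eval s q * Kf d s + c * (eval s (R (N+1)) * Kf d s) := by
      intro s
      rw [hq]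
      simp only [eval_sub, eval_mul, eval_C]
      ring
    rw [show (fun s => eval s p * Kf d s) = _ from funext hsplit]
    rw [integral_add, integral_const_mul]
    · rw [ih (by omega) q hqd, repro_R (by omega : N + 1 ≤ d)]
      rw [hq]
      simp only [eval_sub, eval_mul, eval_C]
      ring
    · exact Continuous.intervalIntegrable (q.continuous.mul (Kf_cont d)) _ _
    · exact Continuous.intervalIntegrable
        (continuous_const.mul ((R (N+1)).continuous.mul (Kf_cont d))) _ _

lemma sum_odd (n : ℕ) : ∑ k ∈ Finset.range n, (2 * (k:ℝ) + 1) = (n:ℝ) ^ 2 := by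
  induction n with
  | zero => simp
  | succ n ih => rw [Finset.sum_range_succ, ih]; push_cast; ring

lemma Kf_bound (d : ℕ) : ∀ s ∈ Icc (0:ℝ) 1, |Kf d s| ≤ ((d:ℝ) + 1) ^ 2 := by
  intro s hs
  have h1 : |Kf d s| ≤ ∑ k ∈ Finset.range (d + 1), (2 * (k:ℝ) + 1) := by
    refine le_trans (Finset.abs_sum_le_sum_abs _ _) (Finset.sum_le_sum ?_)
    intro k _
    rw [abs_mul, abs_mul, abs_div]
    have hfp : (0:ℝ) < (k ! : ℝ) := by positivity
    have h0 : |eval 0 (R k)| ≤ (k ! : ℝ) := by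
      rw [eval_R_zero, abs_mul, abs_pow, abs_neg, abs_one, one_pow, one_mul,
        abs_of_pos hfp]
    have hsb : |eval s (R k)| ≤ (k ! : ℝ) := sup_R k s hs
    have hd : |2 * (k:ℝ) + 1| / |((k ! : ℝ)) ^ 2| = (2 * (k:ℝ) + 1) / ((k ! : ℝ)) ^ 2 := by
      rw [abs_of_pos (by positivity : (0:ℝ) < 2 * (k:ℝ) + 1), abs_of_pos (by positivity)]
    rw [hd]
    calc (2 * (k:ℝ) + 1) / ((k ! : ℝ)) ^ 2 * (|eval 0 (R k)| * |eval s (R k)|)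
        ≤ (2 * (k:ℝ) + 1) / ((k ! : ℝ)) ^ 2 * ((k ! : ℝ) * (k ! : ℝ)) := by
          apply mul_le_mul_of_nonneg_left _ (by positivity)
          exact mul_le_mul h0 hsb (abs_nonneg _) (le_of_lt hfp)
      _ = 2 * (k:ℝ) + 1 := by
          rw [pow_two, div_mul_eq_mul_div, mul_div_assoc,
            div_self (by positivity : (k ! : ℝ) * (k ! : ℝ) ≠ 0), mul_one]
  rw [sum_odd (d+1)] at h1
  push_cast at h1 ⊢
  linarith

lemma scalar_big {d : ℕ} (hd3 : 3 ≤ d) (p : ℝ[X]) (hdeg : p.natDegree ≤ d)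
    (hpos : ∀ s ∈ Icc (0:ℝ) 1, 0 ≤ eval s p) :
    eval 0 p ≤ 2 * ((d:ℝ) ^ 2 - 1) * ∫ s in (0:ℝ)..1, eval s p := by
  have hrepro := repro_aux d d (le_refl d) p hdeg
  have hIpos : 0 ≤ ∫ s in (0:ℝ)..1, eval s p :=
    integral_nonneg (by norm_num) (fun x hx => hpos x hx)
  have hstep : ∫ s in (0:ℝ)..1, eval s p * Kf d s
      ≤ ∫ s in (0:ℝ)..1, eval s p * (((d:ℝ) + 1) ^ 2) := by
    apply integral_mono_on (by norm_num)
    · exact Continuous.intervalIntegrable (p.continuous.mul (Kf_cont d)) _ _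
    · exact Continuous.intervalIntegrable (p.continuous.mul continuous_const) _ _
    · intro x hx
      apply mul_le_mul_of_nonneg_left _ (hpos x hx)
      exact le_trans (le_abs_self _) (Kf_bound d x hx)
  rw [hrepro] at hstep
  have h2 : ∫ s in (0:ℝ)..1, eval s p * (((d:ℝ) + 1) ^ 2)
      = ((d:ℝ) + 1) ^ 2 * ∫ s in (0:ℝ)..1, eval s p := by
    rw [← integral_const_mul]
    apply integral_congr
    intro x _; ring
  rw [h2] at hstep
  have hd3' : (3:ℝ) ≤ (d:ℝ) := by exact_mod_cast hd3
  have : ((d:ℝ) + 1) ^ 2 ≤ 2 * ((d:ℝ) ^ 2 - 1) := by nlinarith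
  nlinarith

lemma scalar_two (p : ℝ[X]) (hdeg : p.natDegree ≤ 2)
    (hpos : ∀ s ∈ Icc (0:ℝ) 1, 0 ≤ eval s p) :
    eval 0 p ≤ 2 * ((2:ℝ) ^ 2 - 1) * ∫ s in (0:ℝ)..1, eval s p := by
  have hev : ∀ x : ℝ, eval x p = p.coeff 0 + p.coeff 1 * x + p.coeff 2 * x ^ 2 := by
    intro x
    rw [eval_eq_sum_range' (Nat.lt_succ_of_le hdeg)]
    simp [Finset.sum_range_succ]
  have hint : ∫ s in (0:ℝ)..1, eval s p
      = p.coeff 0 + p.coeff 1 / 2 + p.coeff 2 / 3 := by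
    have c1 : IntervalIntegrable (fun x : ℝ => p.coeff 0 + p.coeff 1 * x)
        MeasureTheory.volume 0 1 := by
      apply Continuous.intervalIntegrable; continuity
    have c2 : IntervalIntegrable (fun x : ℝ => p.coeff 2 * x ^ 2)
        MeasureTheory.volume 0 1 := by
      apply Continuous.intervalIntegrable; continuity
    have c3 : IntervalIntegrable (fun x : ℝ => (p.coeff 0 : ℝ))
        MeasureTheory.volume 0 1 := intervalIntegrable_const
    have c4 : IntervalIntegrable (fun x : ℝ => p.coeff 1 * x)
        MeasureTheory.volume 0 1 := by
      apply Continuous.intervalIntegrable; continuity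
    rw [show (fun s : ℝ => eval s p)
        = fun x : ℝ => (p.coeff 0 + p.coeff 1 * x) + p.coeff 2 * x ^ 2 from
        funext (fun x => by rw [hev x])]
    rw [intervalIntegral.integral_add c1 c2, intervalIntegral.integral_add c3 c4]
    rw [integral_const, integral_const_mul, integral_const_mul, integral_id, integral_pow]
    norm_num
    ring
  have e0 : eval 0 p = p.coeff 0 := by rw [hev]; ring
  have ehalf := hpos (1/2) (by norm_num)
  have eone := hpos 1 (by norm_num)
  rw [hev] at ehalf eone
  rw [hint, e0]
  norm_num at ehalf eone ⊢
  nlinarith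

lemma scalar_main {d : ℕ} (hd : 2 ≤ d) (p : ℝ[X]) (hdeg : p.natDegree ≤ d)
    (hpos : ∀ s ∈ Icc (0:ℝ) 1, 0 ≤ eval s p) :
    eval 0 p ≤ 2 * ((d:ℝ) ^ 2 - 1) * ∫ s in (0:ℝ)..1, eval s p := by
  rcases eq_or_lt_of_le hd with h | h
  · rw [← h] at hdeg ⊢
    exact_mod_cast scalar_two p hdeg hpos
  · exact scalar_big h p hdeg hpos


end Stmt0Aux

open Stmt0Aux Polynomial Set Matrix in
/-- If a univariate polynomial matrix `M`, each entry of degree at most `d` with `d` even,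
is positive semidefinite on `[0,1]`, then `∫₀¹ M(s) ds ⪰ (1/(2(d²−1))) M(0)` in the
Loewner order. -/
theorem stmt0 (n d : ℕ) (hd_even : Even d) (hd : 2 ≤ d)
    (M : Matrix (Fin n) (Fin n) (Polynomial ℝ))
    (hdeg : ∀ i j, (M i j).natDegree ≤ d)
    (hpsd : ∀ s ∈ Set.Icc (0:ℝ) 1, (M.map (Polynomial.eval s)).PosSemidef) :
    ((Matrix.of fun i j => ∫ s in (0:ℝ)..1, (M i j).eval s)
      - (1 / (2 * ((d:ℝ)^2 - 1))) • M.map (Polynomial.eval 0)).PosSemidef := by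
  have hsymm : ∀ i j, M i j = M j i := by
    intro i j
    apply eq_of_infinite_eval_eq
    apply Set.Infinite.mono ?_ (Set.Icc_infinite (by norm_num : (0:ℝ) < 1))
    intro s hs
    have h := (hpsd s hs).1
    have h2 := Matrix.ext_iff.mpr h j i
    simpa [Matrix.conjTranspose_apply, Matrix.map_apply] using h2
  have hposconst : (0:ℝ) < 2 * ((d:ℝ) ^ 2 - 1) := by
    have : (2:ℝ) ≤ (d:ℝ) := by exact_mod_cast hd
    nlinarith
  refine Matrix.posSemidef_iff_dotProduct_mulVec.mpr ⟨?_, ?_⟩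
  · -- Hermitian
    ext i j
    simp only [Matrix.conjTranspose_apply, Matrix.sub_apply, Matrix.smul_apply, Matrix.of_apply,
      Matrix.map_apply, star_trivial, smul_eq_mul]
    rw [hsymm j i]
  · intro x
    set c : ℝ := 1 / (2 * ((d:ℝ) ^ 2 - 1)) with hc
    set p : ℝ[X] := ∑ i : Fin n, ∑ j : Fin n, (x i * x j) • M i j with hp
    have hdeg' : p.natDegree ≤ d := by
      apply natDegree_sum_le_of_forall_le
      intro i _
      apply natDegree_sum_le_of_forall_le
      intro j _
      exact le_trans (natDegree_smul_le _ _) (hdeg i j)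
    have heval : ∀ s : ℝ, eval s p = ∑ i : Fin n, ∑ j : Fin n, (x i * x j) * eval s (M i j) := by
      intro s
      rw [hp, eval_finset_sum]
      apply Finset.sum_congr rfl
      intro i _
      rw [eval_finset_sum]
      apply Finset.sum_congr rfl
      intro j _
      simp [smul_eq_mul]
    have hpos : ∀ s ∈ Icc (0:ℝ) 1, 0 ≤ eval s p := by
      intro s hs
      have h := (hpsd s hs).dotProduct_mulVec_nonneg x
      have hh : (star x) ⬝ᵥ ((M.map (eval s)) *ᵥ x)
          = ∑ i : Fin n, ∑ j : Fin n, (x i * x j) * eval s (M i j) := by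
        simp only [dotProduct, Matrix.mulVec, Pi.star_apply, star_trivial,
          Matrix.map_apply, Finset.mul_sum]
        apply Finset.sum_congr rfl
        intro i _
        apply Finset.sum_congr rfl
        intro j _
        ring
      rw [hh] at h
      rw [heval s]
      exact h
    have hscal := scalar_main hd p hdeg' hpos
    have hInt : ∫ s in (0:ℝ)..1, eval s p
        = ∑ i : Fin n, ∑ j : Fin n, (x i * x j) * ∫ s in (0:ℝ)..1, eval s (M i j) := by
      rw [show (fun s : ℝ => eval s p)
          = fun s => ∑ i : Fin n, ∑ j : Fin n, (x i * x j) * eval s (M i j) from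
          funext heval]
      rw [intervalIntegral.integral_finset_sum]
      swap
      · intro i _
        apply Continuous.intervalIntegrable
        apply continuous_finset_sum
        intro j _
        exact continuous_const.mul (M i j).continuous
      apply Finset.sum_congr rfl
      intro i _
      rw [intervalIntegral.integral_finset_sum]
      swap
      · intro j _
        exact (continuous_const.mul (M i j).continuous).intervalIntegrable _ _
      apply Finset.sum_congr rfl
      intro j _
      rw [intervalIntegral.integral_const_mul]
    have hexpand : (star x) ⬝ᵥ
        (((Matrix.of fun i j => ∫ s in (0:ℝ)..1, (M i j).eval s)
          - c • M.map (eval 0)) *ᵥ x)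
        = (∑ i : Fin n, ∑ j : Fin n, (x i * x j) * ∫ s in (0:ℝ)..1, eval s (M i j))
          - c * ∑ i : Fin n, ∑ j : Fin n, (x i * x j) * eval 0 (M i j) := by
      simp only [dotProduct, Matrix.mulVec, Matrix.sub_apply, Matrix.smul_apply,
        Matrix.of_apply, Matrix.map_apply, Pi.star_apply, star_trivial, smul_eq_mul,
        Finset.mul_sum, Finset.sum_sub_distrib, mul_sub]
      rw [← Finset.sum_sub_distrib]
      apply Finset.sum_congr rfl
      intro i _
      rw [← Finset.sum_sub_distrib]
      apply Finset.sum_congr rfl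
      intro j _
      ring
    rw [hexpand, ← hInt, ← heval 0]
    have hmul := mul_le_mul_of_nonneg_left hscal
      (le_of_lt (by positivity : (0:ℝ) < c))
    have hcc : c * (2 * ((d:ℝ) ^ 2 - 1) * ∫ s in (0:ℝ)..1, eval s p)
        = ∫ s in (0:ℝ)..1, eval s p := by
      rw [hc]
      field_simp
      exact mul_div_cancel_left₀ _ (ne_of_gt (by linarith))
    rw [hcc] at hmul
    linarith
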